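/- Soundness of SC_LC⊳: if the sequent ⇒ φ is derivable in SC_LC⊳, then φ is LC⊳-valid, i.e., M,w ⊩ φ for every world w of every LC⊳-model M. -/

import Mathlib

/-- Formulas: atoms, ⊤, ⊥, ∧, ∨, →, irreflexive implication ⊳ (`iimp`), later ▷ (`later`). -/
inductive Fm : Type where
  | atom : ℕ → Fm
  | top : Fm
  | bot : Fm
  | and : Fm → Fm → Fm
  | or : Fm → Fm → Fm
  | imp : Fm → Fm → Fm
  | iimp : Fm → Fm → Fm
  | later : Fm → Fm
deriving DecidableEq

/-- A KM-model: nonempty set of worlds, transitive converse-well-founded relation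
(no infinite ascending chain), persistent valuation of atoms. -/
structure KMModel where
  W : Type
  nonempty : Nonempty W
  R : W → W → Prop
  trans : ∀ {x y z}, R x y → R y z → R x z
  cwf : ¬ ∃ f : ℕ → W, ∀ n, R (f n) (f (n + 1))
  val : ℕ → W → Prop
  persist : ∀ p {w x}, val p w → R w x → val p x

/-- Kripke forcing in a KM-model. -/
def KMModel.force (M : KMModel) : Fm → M.W → Prop
  | .atom p, w => M.val p w
  | .top, _ => True
  | .bot, _ => False
  | .and a b, w => M.force a w ∧ M.force b w
  | .or a b, w => M.force a w ∨ M.force b w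
  | .imp a b, w => ∀ x, (w = x ∨ M.R w x) → M.force a x → M.force b x
  | .iimp a b, w => ∀ x, M.R w x → M.force a x → M.force b x
  | .later a, w => ∀ x, M.R w x → M.force a x

/-- An LC⊳-model is a KM-model whose relation is moreover connected. -/
structure LCModel extends KMModel where
  conn : ∀ x y : W, x = y ∨ R x y ∨ R y x

/-- KM-validity. -/
def KMValid (φ : Fm) : Prop :=
  ∀ (M : KMModel) (w : M.W), M.force φ w

/-- LC⊳-validity. -/
def LCValid (φ : Fm) : Prop :=
  ∀ (M : LCModel) (w : M.W), M.toKMModel.force φ w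

/-- ω-semantics forcing (worlds are positive integers). -/
def wforce (η : ℕ → ℕ+ → Prop) : Fm → ℕ+ → Prop
  | .atom p, j => η p j
  | .top, _ => True
  | .bot, _ => False
  | .and a b, j => wforce η a j ∧ wforce η b j
  | .or a b, j => wforce η a j ∨ wforce η b j
  | .imp a b, j => ∀ k ≤ j, wforce η a k → wforce η b k
  | .iimp a b, j => ∀ k < j, wforce η a k → wforce η b k
  | .later a, j => ∀ k < j, wforce η a k

/-- `iimps G` is the set {γ ⊳ γ' | (γ,γ') ∈ G}. -/
def iimps (G : Finset (Fm × Fm)) : Finset Fm := G.image fun p => Fm.iimp p.1 p.2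

/-- `impsOf G` is the set {γ → γ' | (γ,γ') ∈ G}. -/
def impsOf (G : Finset (Fm × Fm)) : Finset Fm := G.image fun p => Fm.imp p.1 p.2

/-- `laters Θ` is the set {▷θ | θ ∈ Θ}. -/
def laters (Θ : Finset Fm) : Finset Fm := Θ.image Fm.later

def Fm.isAtom : Fm → Prop
  | .atom _ => True
  | _ => False

/-- The sequent calculus SC_LC⊳ on sequents of finite sets of formulas. -/
inductive DerivLC : Finset Fm → Finset Fm → Prop where
  | topR (Γ Δ) : DerivLC Γ (insert Fm.top Δ)
  | botL (Γ Δ) : DerivLC (insert Fm.bot Γ) Δ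
  | id (Γ Δ φ) : DerivLC (insert φ Γ) (insert φ Δ)
  | andL (Γ Δ φ ψ) : DerivLC (insert φ (insert ψ Γ)) Δ → DerivLC (insert (φ.and ψ) Γ) Δ
  | andR (Γ Δ φ ψ) : DerivLC Γ (insert φ Δ) → DerivLC Γ (insert ψ Δ) →
      DerivLC Γ (insert (φ.and ψ) Δ)
  | orL (Γ Δ φ ψ) : DerivLC (insert φ Γ) Δ → DerivLC (insert ψ Γ) Δ →
      DerivLC (insert (φ.or ψ) Γ) Δ
  | orR (Γ Δ φ ψ) : DerivLC Γ (insert φ (insert ψ Δ)) → DerivLC Γ (insert (φ.or ψ) Δ)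
  | impL (Γ Δ φ ψ) : DerivLC (insert (φ.iimp ψ) Γ) (insert φ Δ) →
      DerivLC (insert ψ (insert (φ.iimp ψ) Γ)) Δ →
      DerivLC (insert (φ.imp ψ) Γ) Δ
  | impR (Γ Δ φ ψ) : DerivLC (insert φ Γ) (insert ψ Δ) → DerivLC Γ (insert (φ.iimp ψ) Δ) →
      DerivLC Γ (insert (φ.imp ψ) Δ)
  | step (Sl Sr Θ Φ : Finset Fm) (G D : Finset (Fm × Fm)) :
      (∀ a ∈ Sl, a.isAtom) → (∀ a ∈ Sr, a.isAtom) →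
      Sl ∩ Sr = ∅ → Fm.bot ∉ Sl → Fm.top ∉ Sr →
      (D.Nonempty ∨ Φ.Nonempty) →
      (∀ pq ∈ D, DerivLC
          (Sl ∪ impsOf G ∪ Θ ∪ laters Θ ∪ ({Fm.iimp pq.1 pq.2, pq.1} : Finset Fm))
          (insert pq.2 ((impsOf D).erase (Fm.imp pq.1 pq.2) ∪ Φ))) →
      (∀ χ ∈ Φ, DerivLC
          (Sl ∪ Θ ∪ laters Θ ∪ impsOf G ∪ ({Fm.later χ} : Finset Fm))
          (impsOf D ∪ Φ)) →
      DerivLC (Sl ∪ laters Θ ∪ iimps G) (iimps D ∪ laters Φ ∪ Sr)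

/-- The sequent calculus SC_KM: same static rules, transitional rules (⊳R) and (▷R). -/
inductive DerivKM : Finset Fm → Finset Fm → Prop where
  | topR (Γ Δ) : DerivKM Γ (insert Fm.top Δ)
  | botL (Γ Δ) : DerivKM (insert Fm.bot Γ) Δ
  | id (Γ Δ φ) : DerivKM (insert φ Γ) (insert φ Δ)
  | andL (Γ Δ φ ψ) : DerivKM (insert φ (insert ψ Γ)) Δ → DerivKM (insert (φ.and ψ) Γ) Δ
  | andR (Γ Δ φ ψ) : DerivKM Γ (insert φ Δ) → DerivKM Γ (insert ψ Δ) →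
      DerivKM Γ (insert (φ.and ψ) Δ)
  | orL (Γ Δ φ ψ) : DerivKM (insert φ Γ) Δ → DerivKM (insert ψ Γ) Δ →
      DerivKM (insert (φ.or ψ) Γ) Δ
  | orR (Γ Δ φ ψ) : DerivKM Γ (insert φ (insert ψ Δ)) → DerivKM Γ (insert (φ.or ψ) Δ)
  | impL (Γ Δ φ ψ) : DerivKM (insert (φ.iimp ψ) Γ) (insert φ Δ) →
      DerivKM (insert ψ (insert (φ.iimp ψ) Γ)) Δ →
      DerivKM (insert (φ.imp ψ) Γ) Δ
  | impR (Γ Δ φ ψ) : DerivKM (insert φ Γ) (insert ψ Δ) → DerivKM Γ (insert (φ.iimp ψ) Δ) →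
      DerivKM Γ (insert (φ.imp ψ) Δ)
  | iimpR (Sl Sr Θ Φ : Finset Fm) (G D : Finset (Fm × Fm)) (φ ψ : Fm) :
      (∀ a ∈ Sl, a.isAtom) → (∀ a ∈ Sr, a.isAtom) →
      Sl ∩ Sr = ∅ → Fm.bot ∉ Sl → Fm.top ∉ Sr →
      DerivKM (Sl ∪ Θ ∪ laters Θ ∪ impsOf G ∪ ({Fm.iimp φ ψ, φ} : Finset Fm)) {ψ} →
      DerivKM (Sl ∪ laters Θ ∪ iimps G) (insert (Fm.iimp φ ψ) (iimps D ∪ laters Φ ∪ Sr))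
  | laterR (Sl Sr Θ Φ : Finset Fm) (G D : Finset (Fm × Fm)) (φ : Fm) :
      (∀ a ∈ Sl, a.isAtom) → (∀ a ∈ Sr, a.isAtom) →
      Sl ∩ Sr = ∅ → Fm.bot ∉ Sl → Fm.top ∉ Sr →
      DerivKM (Sl ∪ Θ ∪ laters Θ ∪ impsOf G ∪ ({Fm.later φ} : Finset Fm)) {φ} →
      DerivKM (Sl ∪ laters Θ ∪ iimps G) (insert (Fm.later φ) (iimps D ∪ laters Φ ∪ Sr))

/-- A sequent is refutable (over LC⊳-models) if some world of some LC⊳-model forces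
every antecedent formula and no succedent formula. -/
def RefutableLC (Γ Δ : Finset Fm) : Prop :=
  ∃ (M : LCModel) (w : M.W),
    (∀ γ ∈ Γ, M.toKMModel.force γ w) ∧ ∀ δ ∈ Δ, ¬ M.toKMModel.force δ w

/-- A sequent is refutable (over KM-models) if some world of some KM-model forces
every antecedent formula and no succedent formula. -/
def RefutableKM (Γ Δ : Finset Fm) : Prop :=
  ∃ (M : KMModel) (w : M.W),
    (∀ γ ∈ Γ, M.force γ w) ∧ ∀ δ ∈ Δ, ¬ M.force δ w

/-- Length of a formula: number of symbol occurrences. -/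
def Fm.len : Fm → ℕ
  | .atom _ => 1
  | .top => 1
  | .bot => 1
  | .and a b => a.len + b.len + 1
  | .or a b => a.len + b.len + 1
  | .imp a b => a.len + b.len + 1
  | .iimp a b => a.len + b.len + 1
  | .later a => a.len + 1

/-- An explicit numeric code for formulas. -/
def Fm.code : Fm → ℕ
  | .atom p => Nat.pair 0 p
  | .top => Nat.pair 1 0
  | .bot => Nat.pair 2 0
  | .and a b => Nat.pair 3 (Nat.pair a.code b.code)
  | .or a b => Nat.pair 4 (Nat.pair a.code b.code)
  | .imp a b => Nat.pair 5 (Nat.pair a.code b.code)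
  | .iimp a b => Nat.pair 6 (Nat.pair a.code b.code)
  | .later a => Nat.pair 7 a.code

/-- Formulas with no ⊳ and no ▷. -/
def Fm.noModal : Fm → Prop
  | .atom _ => True
  | .top => True
  | .bot => True
  | .and a b => a.noModal ∧ b.noModal
  | .or a b => a.noModal ∧ b.noModal
  | .imp a b => a.noModal ∧ b.noModal
  | .iimp _ _ => False
  | .later _ => False

/-- Classical Boolean evaluation (junk values on the modal connectives). -/
def Fm.beval (v : ℕ → Bool) : Fm → Bool
  | .atom p => v p
  | .top => true
  | .bot => false
  | .and a b => a.beval v && b.beval v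
  | .or a b => a.beval v || b.beval v
  | .imp a b => !(a.beval v) || b.beval v
  | .iimp _ _ => false
  | .later _ => false

section Soundness

lemma KMModel.irrefl (M : KMModel) (x : M.W) : ¬ M.R x x :=
  fun h => M.cwf ⟨fun _ => x, fun _ => h⟩

lemma KMModel.exists_maximal (M : KMModel) (S : Set M.W) (hne : S.Nonempty) :
    ∃ x ∈ S, ∀ y, M.R x y → y ∉ S := by
  by_contra h
  push_neg at h
  have h' : ∀ x : {w // w ∈ S}, ∃ y : {w // w ∈ S}, M.R x.1 y.1 := by
    rintro ⟨x, hx⟩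
    obtain ⟨y, hy1, hy2⟩ := h x hx
    exact ⟨⟨y, hy2⟩, hy1⟩
  choose g hg using h'
  obtain ⟨x0, hx0⟩ := hne
  exact M.cwf ⟨fun n => (g^[n] ⟨x0, hx0⟩).1, fun n => by
    simp only [Function.iterate_succ_apply']
    exact hg _⟩

lemma KMModel.exists_min_list (M : KMModel) (l : List M.W) (hl : l ≠ []) :
    ∃ z ∈ l, ∀ y ∈ l, ¬ M.R y z := by
  induction l with
  | nil => simp at hl
  | cons a t ih =>
    rcases eq_or_ne t [] with rfl | ht
    · refine ⟨a, by simp, ?_⟩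
      intro y hy
      simp only [List.mem_singleton] at hy
      subst hy
      exact M.irrefl y
    · obtain ⟨z, hz, hmin⟩ := ih ht
      by_cases hra : M.R a z
      · refine ⟨a, List.mem_cons_self, ?_⟩
        intro y hy
        rcases List.mem_cons.mp hy with rfl | hy
        · exact M.irrefl y
        · exact fun hya => hmin y hy (M.trans hya hra)
      · refine ⟨z, List.mem_cons_of_mem _ hz, ?_⟩
        intro y hy
        rcases List.mem_cons.mp hy with rfl | hy
        · exact hra
        · exact hmin y hy

lemma force_mono (M : KMModel) (φ : Fm) : ∀ {w x : M.W}, M.force φ w → M.R w x → M.force φ x := by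
  induction φ with
  | atom p => exact fun h r => M.persist p h r
  | top => intro _ _ _ _; trivial
  | bot => intro _ _ h _; exact h.elim
  | and a b iha ihb =>
    intro w x h r
    exact ⟨iha h.1 r, ihb h.2 r⟩
  | or a b iha ihb =>
    intro w x h r
    exact h.imp (iha · r) (ihb · r)
  | imp a b _ _ =>
    intro w x h r y hy ha
    exact h y (Or.inr (hy.elim (fun e => e ▸ r) (M.trans r))) ha
  | iimp a b _ _ =>
    intro w x h r y hy ha
    exact h y (M.trans r hy) ha
  | later a _ =>
    intro w x h r y hy
    exact h y (M.trans r hy)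

lemma DerivLC.sound : ∀ {Γ Δ : Finset Fm}, DerivLC Γ Δ → ∀ (M : LCModel) (w : M.W),
    (∀ γ ∈ Γ, M.toKMModel.force γ w) → ∃ δ ∈ Δ, M.toKMModel.force δ w := by
  intro Γ Δ h M
  induction h with
  | topR Γ Δ =>
    intro w _
    exact ⟨Fm.top, Finset.mem_insert_self _ _, trivial⟩
  | botL Γ Δ =>
    intro w hΓ
    exact absurd (hΓ Fm.bot (Finset.mem_insert_self _ _)) (fun h => h)
  | id Γ Δ φ =>
    intro w hΓ
    exact ⟨φ, Finset.mem_insert_self _ _, hΓ φ (Finset.mem_insert_self _ _)⟩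
  | andL Γ Δ φ ψ _ ih =>
    intro w hΓ
    have hand := hΓ (φ.and ψ) (Finset.mem_insert_self _ _)
    refine ih w ?_
    intro γ hγ
    rcases Finset.mem_insert.mp hγ with rfl | hγ
    · exact hand.1
    rcases Finset.mem_insert.mp hγ with rfl | hγ
    · exact hand.2
    · exact hΓ γ (Finset.mem_insert_of_mem hγ)
  | andR Γ Δ φ ψ _ _ ih1 ih2 =>
    intro w hΓ
    obtain ⟨δ1, hδ1, hf1⟩ := ih1 w hΓ
    rcases Finset.mem_insert.mp hδ1 with h1 | hδ1
    · obtain ⟨δ2, hδ2, hf2⟩ := ih2 w hΓ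
      rcases Finset.mem_insert.mp hδ2 with h2 | hδ2
      · exact ⟨Fm.and φ ψ, Finset.mem_insert_self _ _, h1 ▸ hf1, h2 ▸ hf2⟩
      · exact ⟨δ2, Finset.mem_insert_of_mem hδ2, hf2⟩
    · exact ⟨δ1, Finset.mem_insert_of_mem hδ1, hf1⟩
  | orL Γ Δ φ ψ _ _ ih1 ih2 =>
    intro w hΓ
    have hor := hΓ (φ.or ψ) (Finset.mem_insert_self _ _)
    have hrest : ∀ γ ∈ Γ, M.toKMModel.force γ w :=
      fun γ hγ => hΓ γ (Finset.mem_insert_of_mem hγ)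
    rcases hor with hf | hf
    · exact ih1 w (by
        intro γ hγ
        rcases Finset.mem_insert.mp hγ with rfl | hγ
        · exact hf
        · exact hrest γ hγ)
    · exact ih2 w (by
        intro γ hγ
        rcases Finset.mem_insert.mp hγ with rfl | hγ
        · exact hf
        · exact hrest γ hγ)
  | orR Γ Δ φ ψ _ ih =>
    intro w hΓ
    obtain ⟨δ, hδ, hf⟩ := ih w hΓ
    rcases Finset.mem_insert.mp hδ with h | hδ
    · exact ⟨Fm.or φ ψ, Finset.mem_insert_self _ _, Or.inl (h ▸ hf)⟩
    rcases Finset.mem_insert.mp hδ with h | hδ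
    · exact ⟨Fm.or φ ψ, Finset.mem_insert_self _ _, Or.inr (h ▸ hf)⟩
    · exact ⟨δ, Finset.mem_insert_of_mem hδ, hf⟩
  | impL Γ Δ φ ψ _ _ ih1 ih2 =>
    intro w hΓ
    have himp := hΓ (φ.imp ψ) (Finset.mem_insert_self _ _)
    have hrest : ∀ γ ∈ Γ, M.toKMModel.force γ w :=
      fun γ hγ => hΓ γ (Finset.mem_insert_of_mem hγ)
    have hiimp : M.toKMModel.force (φ.iimp ψ) w :=
      fun x hx ha => himp x (Or.inr hx) ha
    have hΓ1 : ∀ γ ∈ insert (φ.iimp ψ) Γ, M.toKMModel.force γ w := by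
      intro γ hγ
      rcases Finset.mem_insert.mp hγ with rfl | hγ
      · exact hiimp
      · exact hrest γ hγ
    obtain ⟨δ, hδ, hf⟩ := ih1 w hΓ1
    rcases Finset.mem_insert.mp hδ with rfl | hδ
    · -- φ forced at w, so ψ forced at w
      have hψ : M.toKMModel.force ψ w := himp w (Or.inl rfl) hf
      refine ih2 w ?_
      intro γ hγ
      rcases Finset.mem_insert.mp hγ with rfl | hγ
      · exact hψ
      · exact hΓ1 γ hγ
    · exact ⟨δ, hδ, hf⟩
  | impR Γ Δ φ ψ _ _ ih1 ih2 =>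
    intro w hΓ
    obtain ⟨δ, hδ, hf⟩ := ih2 w hΓ
    rcases Finset.mem_insert.mp hδ with rfl | hδ
    · -- φ ⊳ ψ forced at w; decide whether some δ ∈ Δ forced
      by_cases hΔ : ∃ δ ∈ Δ, M.toKMModel.force δ w
      · obtain ⟨δ, hδ, hfδ⟩ := hΔ
        exact ⟨δ, Finset.mem_insert_of_mem hδ, hfδ⟩
      · refine ⟨φ.imp ψ, Finset.mem_insert_self _ _, ?_⟩
        intro x hx ha
        rcases hx with he | hx
        · have ha' : M.toKMModel.force φ w := by rw [he]; exact ha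
          obtain ⟨δ, hδ, hfδ⟩ := ih1 w (by
            intro γ hγ
            rcases Finset.mem_insert.mp hγ with h | hγ'
            · rw [h]; exact ha'
            · exact hΓ γ hγ')
          rcases Finset.mem_insert.mp hδ with h | hδ'
          · have hψw : M.toKMModel.force ψ w := by rw [← h]; exact hfδ
            rw [← he]; exact hψw
          · exact absurd ⟨δ, hδ', hfδ⟩ hΔ
        · exact hf x hx ha
    · exact ⟨δ, Finset.mem_insert_of_mem hδ, hf⟩
  | step Sl Sr Θ Φ G D hSl hSr hdisj hbot htop hne _ _ ihD ihΦ =>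
    intro w hΓ
    by_contra hΔ
    push_neg at hΔ
    -- forced parts at w
    have hSlw : ∀ a ∈ Sl, M.toKMModel.force a w := by
      intro a ha
      exact hΓ a (by simp [Finset.mem_union, ha])
    have hΘw : ∀ θ ∈ Θ, M.toKMModel.force (Fm.later θ) w := by
      intro θ hθ
      exact hΓ (Fm.later θ) (by
        simp only [Finset.mem_union, laters, Finset.mem_image]
        exact Or.inl (Or.inr ⟨θ, hθ, rfl⟩))
    have hGw : ∀ pq ∈ G, M.toKMModel.force (Fm.iimp pq.1 pq.2) w := by
      intro pq hpq
      exact hΓ (Fm.iimp pq.1 pq.2) (by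
        simp only [Finset.mem_union, iimps, Finset.mem_image]
        exact Or.inr ⟨pq, hpq, rfl⟩)
    have hDw : ∀ pq ∈ D, ¬ M.toKMModel.force (Fm.iimp pq.1 pq.2) w := by
      intro pq hpq
      exact hΔ (Fm.iimp pq.1 pq.2) (by
        simp only [Finset.mem_union, iimps, Finset.mem_image]
        exact Or.inl (Or.inl ⟨pq, hpq, rfl⟩))
    have hΦw : ∀ χ ∈ Φ, ¬ M.toKMModel.force (Fm.later χ) w := by
      intro χ hχ
      exact hΔ (Fm.later χ) (by
        simp only [Finset.mem_union, laters, Finset.mem_image]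
        exact Or.inl (Or.inr ⟨χ, hχ, rfl⟩))
    -- index type for failing formulas
    let ι : Type := {pq : Fm × Fm // pq ∈ D} ⊕ {χ : Fm // χ ∈ Φ}
    let Wit : ι → Set M.W := fun i => match i with
      | Sum.inl ⟨pq, _⟩ => {x | M.R w x ∧ M.toKMModel.force pq.1 x ∧ ¬ M.toKMModel.force pq.2 x}
      | Sum.inr ⟨χ, _⟩ => {x | M.R w x ∧ ¬ M.toKMModel.force χ x}
    have hWne : ∀ i : ι, (Wit i).Nonempty := by
      rintro (⟨pq, hpq⟩ | ⟨χ, hχ⟩)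
      · have := hDw pq hpq
        simp only [KMModel.force] at this
        push_neg at this
        obtain ⟨x, hx1, hx2, hx3⟩ := this
        exact ⟨x, hx1, hx2, hx3⟩
      · have := hΦw χ hχ
        simp only [KMModel.force] at this
        push_neg at this
        obtain ⟨x, hx1, hx2⟩ := this
        exact ⟨x, hx1, hx2⟩
    have hmax : ∀ i : ι, ∃ x ∈ Wit i, ∀ y, M.R x y → y ∉ Wit i :=
      fun i => M.toKMModel.exists_maximal (Wit i) (hWne i)
    choose m hm1 hm2 using hmax
    have hιne : Nonempty ι := by
      rcases hne with ⟨pq, hpq⟩ | ⟨χ, hχ⟩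
      · exact ⟨Sum.inl ⟨pq, hpq⟩⟩
      · exact ⟨Sum.inr ⟨χ, hχ⟩⟩
    -- list of maximal witnesses
    have hlne : ((Finset.univ : Finset ι).toList.map m) ≠ [] := by
      simp only [ne_eq, List.map_eq_nil_iff, Finset.toList_eq_nil, Finset.univ_eq_empty_iff]
      exact fun h => (h.false hιne.some)
    obtain ⟨z, hzl, hzmin⟩ := M.toKMModel.exists_min_list _ hlne
    obtain ⟨i₀, _, hi₀⟩ := List.mem_map.mp hzl
    have hcomp : ∀ i : ι, z = m i ∨ M.R z (m i) := by
      intro i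
      have hnz : ¬ M.R (m i) z := hzmin (m i) (List.mem_map.mpr ⟨i, Finset.mem_toList.mpr (Finset.mem_univ i), rfl⟩)
      rcases M.conn z (m i) with h | h | h
      · exact Or.inl h
      · exact Or.inr h
      · exact absurd h hnz
    have hwz : M.R w z := by
      have := hm1 i₀
      rw [hi₀] at this
      rcases i₀ with ⟨pq, hpq⟩ | ⟨χ, hχ⟩
      · exact this.1
      · exact this.1
    -- common forced formulas at z
    have hSlz : ∀ a ∈ Sl, M.toKMModel.force a z :=
      fun a ha => force_mono M.toKMModel a (hSlw a ha) hwz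
    have hΘz : ∀ θ ∈ Θ, M.toKMModel.force θ z :=
      fun θ hθ => hΘw θ hθ z hwz
    have hlΘz : ∀ θ ∈ Θ, M.toKMModel.force (Fm.later θ) z :=
      fun θ hθ => force_mono M.toKMModel (Fm.later θ) (hΘw θ hθ) hwz
    have hGz : ∀ pq ∈ G, M.toKMModel.force (Fm.imp pq.1 pq.2) z := by
      intro pq hpq y hy ha
      refine hGw pq hpq y ?_ ha
      rcases hy with rfl | hy
      · exact hwz
      · exact M.trans hwz hy
    -- refutations at z for the transitional succedents
    have hDz : ∀ pq ∈ D, ¬ M.toKMModel.force (Fm.imp pq.1 pq.2) z := by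
      intro pq hpq hf
      have hmW := hm1 (Sum.inl ⟨pq, hpq⟩)
      obtain ⟨_, hp, hq⟩ := hmW
      have hle := hcomp (Sum.inl ⟨pq, hpq⟩)
      exact hq (hf (m (Sum.inl ⟨pq, hpq⟩)) hle hp)
    have hΦz : ∀ χ ∈ Φ, ¬ M.toKMModel.force χ z := by
      intro χ hχ hf
      have hmW := hm1 (Sum.inr ⟨χ, hχ⟩)
      obtain ⟨_, hnχ⟩ := hmW
      rcases hcomp (Sum.inr ⟨χ, hχ⟩) with he | hlt
      · exact hnχ (he ▸ hf)
      · exact hnχ (force_mono M.toKMModel χ hf hlt)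
    -- case on which formula z is a maximal witness of
    rcases i₀ with ⟨⟨p, q⟩, hpq⟩ | ⟨χ₀, hχ₀⟩
    · have hzW := hm1 (Sum.inl ⟨(p, q), hpq⟩)
      rw [hi₀] at hzW
      obtain ⟨_, hpz, hqz⟩ := hzW
      have hmaxz := hm2 (Sum.inl ⟨(p, q), hpq⟩)
      rw [hi₀] at hmaxz
      have hiimpz : M.toKMModel.force (Fm.iimp p q) z := by
        intro y hy ha
        by_contra hq
        exact hmaxz y hy ⟨M.trans hwz hy, ha, hq⟩
      obtain ⟨δ, hδ, hfδ⟩ := ihD (p, q) hpq z (by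
        intro γ hγ
        simp only [Finset.mem_union, Finset.mem_insert, Finset.mem_singleton, impsOf, laters,
          Finset.mem_image] at hγ
        rcases hγ with ((((hγ | ⟨rs, hrs, rfl⟩) | hγ) | ⟨θ, hθ, rfl⟩) | (rfl | rfl))
        · exact hSlz γ hγ
        · exact hGz rs hrs
        · exact hΘz γ hγ
        · exact hlΘz θ hθ
        · exact hiimpz
        · exact hpz)
      rcases Finset.mem_insert.mp hδ with rfl | hδ
      · exact hqz hfδ
      rcases Finset.mem_union.mp hδ with hδ | hδ
      · obtain ⟨hδ1, hδ2⟩ := Finset.mem_erase.mp hδ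
        simp only [impsOf, Finset.mem_image] at hδ2
        obtain ⟨rs, hrs, rfl⟩ := hδ2
        exact hDz rs hrs hfδ
      · exact hΦz δ hδ hfδ
    · have hzW := hm1 (Sum.inr ⟨χ₀, hχ₀⟩)
      rw [hi₀] at hzW
      obtain ⟨_, hχ₀z⟩ := hzW
      have hmaxz := hm2 (Sum.inr ⟨χ₀, hχ₀⟩)
      rw [hi₀] at hmaxz
      have hlχz : M.toKMModel.force (Fm.later χ₀) z := by
        intro y hy
        by_contra hq
        exact hmaxz y hy ⟨M.trans hwz hy, hq⟩
      obtain ⟨δ, hδ, hfδ⟩ := ihΦ χ₀ hχ₀ z (by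
        intro γ hγ
        simp only [Finset.mem_union, Finset.mem_singleton, impsOf, laters,
          Finset.mem_image] at hγ
        rcases hγ with ((((hγ | hγ) | ⟨θ, hθ, rfl⟩) | ⟨rs, hrs, rfl⟩) | rfl)
        · exact hSlz γ hγ
        · exact hΘz γ hγ
        · exact hlΘz θ hθ
        · exact hGz rs hrs
        · exact hlχz)
      rcases Finset.mem_union.mp hδ with hδ | hδ
      · simp only [impsOf, Finset.mem_image] at hδ
        obtain ⟨rs, hrs, rfl⟩ := hδ
        exact hDz rs hrs hfδ
      · exact hΦz δ hδ hfδ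

end Soundness

/-- soundness of SC_LC⊳. -/
theorem lc_soundness (φ : Fm) (h : DerivLC ∅ {φ}) : LCValid φ := by
  intro M w
  obtain ⟨δ, hδ, hf⟩ := h.sound M w (by simp)
  simp only [Finset.mem_singleton] at hδ
  exact hδ ▸ hf
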